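/- Let σ be convex, C¹ and Lipschitz with σ* strictly convex on dom σ* (in the sense that for p ≠ p₀ and y ∈ ∂σ*(p₀), ⟨y, p-p₀⟩ < σ*(p) - σ*(p₀)), and let H(t,·) be strictly concave for a.e. t ∈ (0,T) and C¹ in p. Let p₀ = ∇σ(y) ∈ ℓ(t₀,x₀) and x(t) = x₀ + ∫_{t₀}^t H_p(τ,p₀)dτ. Then ℓ(t, x(t)) = {p₀} for all t ∈ [0, t₀). -/

import Mathlib

local notation "⟪" x ", " y "⟫" => @inner ℝ _ _ x y

/-- The Fenchel (Legendre) conjugate of `σ`, with values in `EReal`. -/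
noncomputable def fenchelConj {n : ℕ} (σ : EuclideanSpace ℝ (Fin n) → ℝ)
    (q : EuclideanSpace ℝ (Fin n)) : EReal :=
  ⨆ x : EuclideanSpace ℝ (Fin n), ((⟪x, q⟫ - σ x : ℝ) : EReal)

/-- The Hopf functional `φ(t,x,q) = ⟨x,q⟩ - σ*(q) - ∫₀ᵗ H(τ,q) dτ` (`EReal`-valued). -/
noncomputable def hopfPhi {n : ℕ} (σ : EuclideanSpace ℝ (Fin n) → ℝ)
    (H : ℝ → EuclideanSpace ℝ (Fin n) → ℝ) (t : ℝ)
    (x q : EuclideanSpace ℝ (Fin n)) : EReal :=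
  ((⟪x, q⟫ - ∫ τ in (0:ℝ)..t, H τ q : ℝ) : EReal) - fenchelConj σ q

/-- The set `ℓ(t,x)` of maximizers over `q ∈ ℝⁿ` of `φ(t,x,·)`. -/
def hopfArgmax {n : ℕ} (σ : EuclideanSpace ℝ (Fin n) → ℝ)
    (H : ℝ → EuclideanSpace ℝ (Fin n) → ℝ) (t : ℝ)
    (x : EuclideanSpace ℝ (Fin n)) : Set (EuclideanSpace ℝ (Fin n)) :=
  {q | ∀ q', hopfPhi σ H t x q' ≤ hopfPhi σ H t x q}

lemma auxLine {n : ℕ} {f : EuclideanSpace ℝ (Fin n) → ℝ} {g x : EuclideanSpace ℝ (Fin n)}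
    (hf : HasGradientAt f g x) (v : EuclideanSpace ℝ (Fin n)) :
    HasDerivAt (fun s : ℝ => f (s • v + x)) ⟪g, v⟫ 0 := by
  have h1 : HasDerivAt (fun s : ℝ => s • v + x) v 0 := by
    simpa using ((hasDerivAt_id (0:ℝ)).smul_const v).add_const x
  have h2 : HasFDerivAt f (InnerProductSpace.toDual ℝ _ g) x :=
    hasGradientAt_iff_hasFDerivAt.mp hf
  have h2' : HasFDerivAt f (InnerProductSpace.toDual ℝ _ g) ((fun s : ℝ => s • v + x) 0) := by
    simpa using h2
  have h3 := h2'.comp_hasDerivAt 0 h1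
  simpa [InnerProductSpace.toDual_apply_apply, Function.comp_def] using h3

lemma convexGradIneq {n : ℕ} {σ : EuclideanSpace ℝ (Fin n) → ℝ}
    (hconv : ConvexOn ℝ Set.univ σ) {g y : EuclideanSpace ℝ (Fin n)}
    (hg : HasGradientAt σ g y) (x : EuclideanSpace ℝ (Fin n)) :
    σ y + ⟪g, x - y⟫ ≤ σ x := by
  have hφconv : ConvexOn ℝ Set.univ (fun s : ℝ => σ (s • (x - y) + y)) := by
    have := hconv.comp_affineMap (AffineMap.lineMap y x : ℝ →ᵃ[ℝ] EuclideanSpace ℝ (Fin n))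
    simpa [Function.comp_def, AffineMap.lineMap_apply] using this
  have hd := auxLine hg (x - y)
  have hslope := hφconv.le_slope_of_hasDerivAt (Set.mem_univ (0:ℝ)) (Set.mem_univ 1)
    one_pos hd
  rw [slope_def_field] at hslope
  simp only [one_smul, sub_add_cancel, zero_smul, zero_add, div_one] at hslope
  linarith [hslope]

open MeasureTheory in
lemma measF {n : ℕ} {T : ℝ} {H : ℝ → EuclideanSpace ℝ (Fin n) → ℝ}
    {Hp : ℝ → EuclideanSpace ℝ (Fin n) → EuclideanSpace ℝ (Fin n)}
    (hH : ContinuousOn (fun p : ℝ × EuclideanSpace ℝ (Fin n) => H p.1 p.2)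
      (Set.Icc 0 T ×ˢ Set.univ))
    (hHp : ∀ t q, HasGradientAt (H t) (Hp t q) q)
    {t t₀ : ℝ} (hsub : Set.Ioc t t₀ ⊆ Set.Icc 0 T) (p₀ : EuclideanSpace ℝ (Fin n)) :
    AEStronglyMeasurable (fun τ => Hp τ p₀) (volume.restrict (Set.Ioc t t₀)) := by
  have contH : ∀ q : EuclideanSpace ℝ (Fin n),
      ContinuousOn (fun τ => H τ q) (Set.Icc 0 T) := by
    intro q
    exact hH.comp ((continuous_id.prodMk continuous_const).continuousOn)
      (fun τ hτ => ⟨hτ, Set.mem_univ q⟩)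
  set g : ℕ → ℝ → EuclideanSpace ℝ (Fin n) := fun k τ =>
    ∑ i, ((H τ ((((k:ℝ)+1)⁻¹) • EuclideanSpace.single i (1:ℝ) + p₀) - H τ p₀)
        * ((k:ℝ)+1)) • EuclideanSpace.single i (1:ℝ) with hgdef
  have hgm : ∀ k : ℕ, AEMeasurable (g k) (volume.restrict (Set.Ioc t t₀)) := by
    intro k
    apply ContinuousOn.aemeasurable _ measurableSet_Ioc
    apply continuousOn_finset_sum
    intro i _
    exact ((((contH _).mono hsub).sub ((contH p₀).mono hsub)).mul
      continuousOn_const).smul continuousOn_const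
  have key : ∀ τ, Filter.Tendsto (fun k : ℕ => g k τ) Filter.atTop (nhds (Hp τ p₀)) := by
    intro τ
    have hrepr := (EuclideanSpace.basisFun (Fin n) ℝ).sum_repr' (Hp τ p₀)
    rw [← hrepr]
    apply tendsto_finset_sum
    intro i _
    have hd := auxLine (hHp τ p₀) (EuclideanSpace.single i (1:ℝ))
    have hs := hasDerivAt_iff_tendsto_slope.mp hd
    have hseq : Filter.Tendsto (fun k : ℕ => ((k:ℝ)+1)⁻¹) Filter.atTop
        (nhdsWithin 0 {(0:ℝ)}ᶜ) := by
      apply tendsto_nhdsWithin_of_tendsto_nhds_of_eventually_within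
      · simpa only [one_div] using tendsto_one_div_add_atTop_nhds_zero_nat (𝕜 := ℝ)
      · filter_upwards with k
        simp only [Set.mem_compl_iff, Set.mem_singleton_iff]
        positivity
    have hcomp := hs.comp hseq
    have heq : ((fun s : ℝ => slope (fun s : ℝ =>
          H τ (s • EuclideanSpace.single i (1:ℝ) + p₀)) 0 s) ∘ fun k : ℕ => ((k:ℝ)+1)⁻¹)
        = fun k : ℕ => (H τ ((((k:ℝ)+1)⁻¹) • EuclideanSpace.single i (1:ℝ) + p₀) - H τ p₀)
            * ((k:ℝ)+1) := by
      funext k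
      have hk : ((k:ℝ)+1) ≠ 0 := by positivity
      simp only [Function.comp, slope_def_field, zero_smul, zero_add, sub_zero]
      rw [div_eq_mul_inv, inv_inv]
    rw [heq] at hcomp
    have := hcomp.smul_const (EuclideanSpace.single i (1:ℝ))
    have hflip : ⟪Hp τ p₀, EuclideanSpace.single i (1:ℝ)⟫
        = ⟪EuclideanSpace.basisFun (Fin n) ℝ i, Hp τ p₀⟫ := by
      rw [real_inner_comm, EuclideanSpace.basisFun_apply]
    rw [hflip] at this
    simpa [EuclideanSpace.basisFun_apply] using this
  exact (aemeasurable_of_tendsto_metrizable_ae _ hgm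
    (Filter.Eventually.of_forall key)).aestronglyMeasurable

open MeasureTheory in
theorem stmt13 {n : ℕ} (T : ℝ) (hT : 0 < T) (L : NNReal)
    (σ : EuclideanSpace ℝ (Fin n) → ℝ)
    (hconv : ConvexOn ℝ Set.univ σ) (hσ : ContDiff ℝ 1 σ)
    (hlip : LipschitzWith L σ)
    -- strict convexity of σ*: for p ≠ q and z ∈ ∂σ*(q), ⟨z, p - q⟩ < σ*(p) - σ*(q)
    (hstrict : ∀ p q z : EuclideanSpace ℝ (Fin n), p ≠ q →
      (∀ w, ((⟪z, w - q⟫ : ℝ) : EReal) + fenchelConj σ q ≤ fenchelConj σ w) →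
      ((⟪z, p - q⟫ : ℝ) : EReal) + fenchelConj σ q < fenchelConj σ p)
    (H : ℝ → EuclideanSpace ℝ (Fin n) → ℝ)
    (Hp : ℝ → EuclideanSpace ℝ (Fin n) → EuclideanSpace ℝ (Fin n))
    (hH : ContinuousOn (fun p : ℝ × EuclideanSpace ℝ (Fin n) => H p.1 p.2)
      (Set.Icc 0 T ×ˢ Set.univ))
    (hHp : ∀ t q, HasGradientAt (H t) (Hp t q) q)
    -- strict concavity of H(t,·) for a.e. t ∈ (0,T):
    (hHconc : ∀ᵐ t ∂(volume.restrict (Set.Ioo (0:ℝ) T)),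
      ∀ p q : EuclideanSpace ℝ (Fin n), p ≠ q →
        H t p - H t q - ⟪Hp t q, p - q⟫ < 0)
    (t₀ : ℝ) (ht₀ : t₀ ∈ Set.Ioo 0 T)
    (y x₀ p₀ : EuclideanSpace ℝ (Fin n))
    (hp₀ : p₀ = gradient σ y)
    (hmax : p₀ ∈ hopfArgmax σ H t₀ x₀)
    (x : ℝ → EuclideanSpace ℝ (Fin n))
    (hx : ∀ t, x t = x₀ + ∫ τ in t₀..t, Hp τ p₀) :
    ∀ t ∈ Set.Ico (0:ℝ) t₀, hopfArgmax σ H t (x t) = {p₀} := by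
  obtain ⟨ht₀0, ht₀T⟩ := ht₀
  have hgrad : HasGradientAt σ p₀ y := by
    rw [hp₀]; exact ((hσ.differentiable one_ne_zero) y).hasGradientAt
  set c₀ : ℝ := ⟪y, p₀⟫ - σ y with hc₀
  have hSp₀ : fenchelConj σ p₀ = (c₀ : EReal) := by
    apply le_antisymm
    · apply iSup_le
      intro z
      rw [EReal.coe_le_coe_iff]
      have h1 := convexGradIneq hconv hgrad z
      have h2 : ⟪p₀, z - y⟫ = ⟪z, p₀⟫ - ⟪y, p₀⟫ := by
        rw [inner_sub_right, real_inner_comm p₀ z, real_inner_comm p₀ y]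
      rw [h2] at h1
      rw [hc₀]; linarith
    · exact le_iSup (fun z => ((⟪z, p₀⟫ - σ z : ℝ) : EReal)) y
  have hSne : ∀ q, fenchelConj σ q ≠ ⊥ := by
    intro q h
    have h1 : ((⟪(0 : EuclideanSpace ℝ (Fin n)), q⟫ - σ 0 : ℝ) : EReal) ≤ fenchelConj σ q :=
      le_iSup (fun z => ((⟪z, q⟫ - σ z : ℝ) : EReal)) 0
    rw [h] at h1
    simp at h1
  have contH : ∀ q : EuclideanSpace ℝ (Fin n),
      ContinuousOn (fun τ => H τ q) (Set.Icc 0 T) := by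
    intro q
    exact hH.comp ((continuous_id.prodMk continuous_const).continuousOn)
      (fun τ hτ => ⟨hτ, Set.mem_univ q⟩)
  have intgH : ∀ (q : EuclideanSpace ℝ (Fin n)) (a b : ℝ), a ∈ Set.Icc (0:ℝ) T →
      b ∈ Set.Icc (0:ℝ) T → IntervalIntegrable (fun τ => H τ q) volume a b := by
    intro q a b ha hb
    exact ((contH q).mono (Set.uIcc_subset_Icc ha hb)).intervalIntegrable
  rintro t ⟨ht0, htt₀⟩
  have htT : t ∈ Set.Icc (0:ℝ) T := ⟨ht0, (htt₀.trans ht₀T).le⟩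
  have ht₀Icc : t₀ ∈ Set.Icc (0:ℝ) T := ⟨ht₀0.le, ht₀T.le⟩
  have hsub : Set.Ioc t t₀ ⊆ Set.Ioo 0 T := fun τ hτ =>
    ⟨ht0.trans_lt hτ.1, lt_of_le_of_lt hτ.2 ht₀T⟩
  have hsubIcc : Set.Ioc t t₀ ⊆ Set.Icc 0 T := fun τ hτ =>
    ⟨(ht0.trans_lt hτ.1).le, (lt_of_le_of_lt hτ.2 ht₀T).le⟩
  set F : ℝ → EuclideanSpace ℝ (Fin n) := fun τ => Hp τ p₀ with hFdef
  have hFmeas : AEStronglyMeasurable F (volume.restrict (Set.Ioc t t₀)) :=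
    measF hH hHp hsubIcc p₀
  -- a.e. bound on ‖F‖
  obtain ⟨C, hC⟩ : ∃ C, ∀ z ∈ (Set.Icc (0:ℝ) T) ×ˢ Metric.closedBall p₀ 1,
      ‖H z.1 z.2‖ ≤ C :=
    (isCompact_Icc.prod (isCompact_closedBall p₀ 1)).exists_bound_of_continuousOn
      (hH.mono (Set.prod_mono_right (Set.subset_univ _)))
  have hbound : ∀ᵐ τ ∂(volume.restrict (Set.Ioo 0 T)), ‖F τ‖ ≤ 2 * C := by
    filter_upwards [hHconc, ae_restrict_mem measurableSet_Ioo] with τ hτ hτmem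
    have hτIcc : τ ∈ Set.Icc (0:ℝ) T := ⟨hτmem.1.le, hτmem.2.le⟩
    have hb2 := hC (τ, p₀) ⟨hτIcc, Metric.mem_closedBall_self zero_le_one⟩
    simp only [Real.norm_eq_abs] at hb2
    rcases eq_or_ne (F τ) 0 with h0 | h0
    · rw [h0, norm_zero]
      have : (0:ℝ) ≤ |H τ p₀| := abs_nonneg _
      linarith
    · set u := ‖F τ‖⁻¹ • F τ with hu
      have hFn : ‖F τ‖ ≠ 0 := norm_ne_zero_iff.mpr h0
      have hun : ‖u‖ = 1 := by
        rw [hu, norm_smul, norm_inv, norm_norm, inv_mul_cancel₀ hFn]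
      have hune : u ≠ 0 := by
        intro h; rw [h, norm_zero] at hun; exact one_ne_zero hun.symm
      have hne : p₀ - u ≠ p₀ := by
        intro h; exact hune (sub_eq_self.mp h)
      have hkey := hτ (p₀ - u) p₀ hne
      have hdiff : (p₀ - u) - p₀ = -u := by abel
      have hinner : ⟪F τ, (p₀ - u) - p₀⟫ = -‖F τ‖ := by
        rw [hdiff, inner_neg_right, hu, real_inner_smul_right,
          real_inner_self_eq_norm_sq]
        rw [sq]
        field_simp
      rw [hinner] at hkey
      have hb1 := hC (τ, p₀ - u) ⟨hτIcc, by
        simp only [Metric.mem_closedBall, dist_eq_norm, hdiff, norm_neg, hun, le_refl]⟩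
      simp only [Real.norm_eq_abs] at hb1
      have h1 : ‖F τ‖ < H τ p₀ - H τ (p₀ - u) := by linarith
      have h2 : H τ p₀ ≤ |H τ p₀| := le_abs_self _
      have h3 : -(H τ (p₀ - u)) ≤ |H τ (p₀ - u)| := neg_le_abs _
      linarith
  have hFbd : ∀ᵐ τ ∂(volume.restrict (Set.Ioc t t₀)), ‖F τ‖ ≤ 2 * C :=
    ae_restrict_of_ae_restrict_of_subset hsub hbound
  have hFint : IntegrableOn F (Set.Ioc t t₀) volume := by
    refine Integrable.mono' ?_ hFmeas hFbd
    exact integrableOn_const measure_Ioc_lt_top.ne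
  have hFsint : ∀ v : EuclideanSpace ℝ (Fin n),
      IntegrableOn (fun τ => ⟪v, F τ⟫) (Set.Ioc t t₀) volume := fun v =>
    (innerSL ℝ v).integrable_comp hFint
  have hinnerInt : ∀ v : EuclideanSpace ℝ (Fin n),
      ⟪v, ∫ τ in Set.Ioc t t₀, F τ⟫ = ∫ τ in Set.Ioc t t₀, ⟪v, F τ⟫ := fun v =>
    (integral_inner hFint v).symm
  have hxt : ∀ v : EuclideanSpace ℝ (Fin n),
      ⟪x t, v⟫ = ⟪x₀, v⟫ - ∫ τ in Set.Ioc t t₀, ⟪v, F τ⟫ := by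
    intro v
    rw [hx t, intervalIntegral.integral_symm, intervalIntegral.integral_of_le htt₀.le,
      inner_add_left, inner_neg_left, ← hinnerInt v,
      real_inner_comm (∫ τ in Set.Ioc t t₀, F τ) v]
    ring
  have hHsplit : ∀ q : EuclideanSpace ℝ (Fin n), (∫ τ in (0:ℝ)..t, H τ q)
      = (∫ τ in (0:ℝ)..t₀, H τ q) - ∫ τ in Set.Ioc t t₀, H τ q := by
    intro q
    have h1 := intervalIntegral.integral_add_adjacent_intervals
      (intgH q 0 t ⟨le_rfl, hT.le⟩ htT) (intgH q t t₀ htT ht₀Icc)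
    rw [← intervalIntegral.integral_of_le htt₀.le]
    linarith
  have hHint : ∀ q : EuclideanSpace ℝ (Fin n),
      IntegrableOn (fun τ => H τ q) (Set.Ioc t t₀) volume := fun q =>
    (intervalIntegrable_iff_integrableOn_Ioc_of_le htt₀.le).mp (intgH q t t₀ htT ht₀Icc)
  have hneg : ∀ q : EuclideanSpace ℝ (Fin n), q ≠ p₀ →
      (∫ τ in Set.Ioc t t₀, (H τ q - H τ p₀ - ⟪q - p₀, F τ⟫)) < 0 := by
    intro q hq
    set g : ℝ → ℝ := fun τ => H τ p₀ - H τ q + ⟪q - p₀, F τ⟫ with hgdef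
    have hgpos : ∀ᵐ τ ∂(volume.restrict (Set.Ioc t t₀)), 0 < g τ := by
      filter_upwards [ae_restrict_of_ae_restrict_of_subset hsub hHconc] with τ hτ
      have h2 := hτ q p₀ hq
      have h3 : ⟪q - p₀, F τ⟫ = ⟪F τ, q - p₀⟫ := real_inner_comm _ _
      simp only [hgdef]
      rw [h3]
      linarith
    have hgint : IntegrableOn g (Set.Ioc t t₀) volume :=
      ((hHint p₀).sub (hHint q)).add (hFsint (q - p₀))
    have hpos : 0 < ∫ τ in Set.Ioc t t₀, g τ := by
      rw [setIntegral_pos_iff_support_of_nonneg_ae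
        (hgpos.mono fun τ h => h.le) hgint]
      by_contra hcon
      push_neg at hcon
      have h0 : volume (Function.support g ∩ Set.Ioc t t₀) = 0 :=
        le_antisymm (by simpa using hcon) zero_le
      have h1 : volume ({τ | ¬ 0 < g τ} ∩ Set.Ioc t t₀) = 0 := by
        have := ae_iff.mp hgpos
        rwa [Measure.restrict_apply' measurableSet_Ioc] at this
      have h2 : Set.Ioc t t₀ ⊆ (Function.support g ∩ Set.Ioc t t₀)
          ∪ ({τ | ¬ 0 < g τ} ∩ Set.Ioc t t₀) := by
        intro τ hτ
        by_cases hgτ : 0 < g τ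
        · exact Or.inl ⟨ne_of_gt hgτ, hτ⟩
        · exact Or.inr ⟨hgτ, hτ⟩
      have h3 := (measure_mono (μ := (volume : Measure ℝ)) h2).trans (measure_union_le _ _)
      rw [h0, h1, add_zero] at h3
      have h4 : volume (Set.Ioc t t₀) = 0 := le_antisymm h3 zero_le
      rw [Real.volume_Ioc] at h4
      simp only [ENNReal.ofReal_eq_zero] at h4
      linarith
    have heq : (∫ τ in Set.Ioc t t₀, (H τ q - H τ p₀ - ⟪q - p₀, F τ⟫))
        = - ∫ τ in Set.Ioc t t₀, g τ := by
      rw [← integral_neg]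
      apply setIntegral_congr_fun measurableSet_Ioc
      intro τ _
      simp only [hgdef]
      ring
    rw [heq]
    linarith
  -- the key strict comparison
  have hstrictlt : ∀ q : EuclideanSpace ℝ (Fin n), q ≠ p₀ →
      hopfPhi σ H t (x t) q < hopfPhi σ H t (x t) p₀ := by
    intro q hq
    have hphip₀ : hopfPhi σ H t (x t) p₀
        = (((⟪x t, p₀⟫ - ∫ τ in (0:ℝ)..t, H τ p₀) - c₀ : ℝ) : EReal) := by
      rw [hopfPhi, hSp₀, ← EReal.coe_sub]
    rcases eq_or_ne (fenchelConj σ q) ⊤ with hS | hS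
    · rw [hopfPhi, hS, EReal.sub_top, hphip₀]
      exact EReal.bot_lt_coe _
    · obtain ⟨s, hs⟩ : ∃ s : ℝ, fenchelConj σ q = (s : EReal) :=
        ⟨(fenchelConj σ q).toReal, (EReal.coe_toReal hS (hSne q)).symm⟩
      have hphiq : hopfPhi σ H t (x t) q
          = (((⟪x t, q⟫ - ∫ τ in (0:ℝ)..t, H τ q) - s : ℝ) : EReal) := by
        rw [hopfPhi, hs, ← EReal.coe_sub]
      have hm := hmax q
      rw [hopfPhi, hopfPhi, hs, hSp₀, ← EReal.coe_sub, ← EReal.coe_sub,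
        EReal.coe_le_coe_iff] at hm
      rw [hphiq, hphip₀, EReal.coe_lt_coe_iff]
      have hiq := hxt q
      have hip := hxt p₀
      have hsq := hHsplit q
      have hsp := hHsplit p₀
      have hsplitInner : (∫ τ in Set.Ioc t t₀, ⟪q, F τ⟫)
            - (∫ τ in Set.Ioc t t₀, ⟪p₀, F τ⟫)
          = ∫ τ in Set.Ioc t t₀, ⟪q - p₀, F τ⟫ := by
        rw [← integral_sub (hFsint q) (hFsint p₀)]
        apply setIntegral_congr_fun measurableSet_Ioc
        intro τ _
        simp [inner_sub_left]
      have hintsub : (∫ τ in Set.Ioc t t₀, (H τ q - H τ p₀ - ⟪q - p₀, F τ⟫))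
          = (∫ τ in Set.Ioc t t₀, H τ q) - (∫ τ in Set.Ioc t t₀, H τ p₀)
            - ∫ τ in Set.Ioc t t₀, ⟪q - p₀, F τ⟫ := by
        have hI1 : Integrable (fun τ => H τ q - H τ p₀)
            (volume.restrict (Set.Ioc t t₀)) := (hHint q).sub (hHint p₀)
        rw [integral_sub hI1 (hFsint (q - p₀)), integral_sub (hHint q) (hHint p₀)]
      have hn := hneg q hq
      rw [hintsub, ← hsplitInner] at hn
      rw [hiq, hip, hsq, hsp]
      linarith
  ext q
  simp only [hopfArgmax, Set.mem_setOf_eq, Set.mem_singleton_iff]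
  constructor
  · intro hqmax
    by_contra hne
    exact absurd (hqmax p₀) (not_le.mpr (hstrictlt q hne))
  · intro hq q'
    subst hq
    rcases eq_or_ne q' q with rfl | hne
    · exact le_rfl
    · exact (hstrictlt q' hne).le
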